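/- For every integer n ≥ 2 and every real r > 1, the double integral ∫_0^r ∫_0^ρ (sinh t / sinh ρ)^{n−1} dt dρ is at most 1/2 + (r−1)/((n−1)·(1−e^{−2})^{n−1}). In particular this quantity is O(r) as r → ∞, so the two-sided bound comparable to r² for the torsion function of hyperbolic balls fails to hold uniformly for all radii. (Remark 4.2.) -/

import Mathlib

section
open Real MeasureTheory intervalIntegral Set

private lemma exp_int_aux (c : ℝ) (hc : c ≠ 0) (ρ : ℝ) :
    ∫ t in (0:ℝ)..ρ, Real.exp (c * t) = (Real.exp (c * ρ) - 1) / c := by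
  rw [intervalIntegral.integral_comp_mul_left (fun x => Real.exp x) hc]
  simp [integral_exp]
  ring

private lemma sinh_ge_aux (ρ : ℝ) (hρ : 1 ≤ ρ) :
    (1 - Real.exp (-2)) * Real.exp ρ / 2 ≤ Real.sinh ρ := by
  rw [Real.sinh_eq]
  have h1 : Real.exp (-ρ) ≤ Real.exp (-2) * Real.exp ρ := by
    rw [← Real.exp_add]
    exact Real.exp_le_exp.2 (by linarith)
  nlinarith [Real.exp_pos ρ]

/-- **Remark 4.2 (linear growth for large radii).** For every integer `n ≥ 2`
and every real `r > 1`,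
`∫_0^r ∫_0^ρ (sinh t / sinh ρ)^{n−1} dt dρ ≤ 1/2 + (r−1)/((n−1)(1−e^{−2})^{n−1})`.
In particular this quantity is `O(r)` as `r → ∞`, so the two-sided bound
comparable to `r²` for the torsion function of hyperbolic balls fails to hold
uniformly for all radii. -/
theorem hyperbolic_torsion_integral_linear_growth (n : ℕ) (hn : 2 ≤ n)
    (r : ℝ) (hr : 1 < r) :
    (∫ ρ in (0:ℝ)..r, ∫ t in (0:ℝ)..ρ, (Real.sinh t / Real.sinh ρ) ^ (n - 1)) ≤
      1 / 2 + (r - 1) / (((n : ℝ) - 1) * (1 - Real.exp (-2)) ^ (n - 1)) := by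
  set k := n - 1 with hkdef
  have hk1 : 1 ≤ k := by omega
  have hkR : (1:ℝ) ≤ (k:ℝ) := by exact_mod_cast hk1
  have hkpos : (0:ℝ) < (k:ℝ) := by linarith
  have hcast : ((n:ℝ) - 1) = (k:ℝ) := by
    have hnk : n = k + 1 := by omega
    rw [hnk]; push_cast; ring
  set a := 1 - Real.exp (-2) with hadef
  have ha0 : 0 < a := by
    have : Real.exp (-2) < 1 := Real.exp_lt_one_iff.mpr (by norm_num)
    linarith
  set C := 1 / ((k:ℝ) * a ^ k) with hCdef
  have hC0 : 0 < C := by positivity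
  set g : ℝ → ℝ := fun ρ => (∫ t in (0:ℝ)..ρ, Real.sinh t ^ k) / Real.sinh ρ ^ k with hgdef
  have hF_cont : Continuous fun ρ : ℝ => ∫ t in (0:ℝ)..ρ, Real.sinh t ^ k :=
    intervalIntegral.continuous_primitive
      (fun a b => (Real.continuous_sinh.pow k).intervalIntegrable a b) 0
  have hg_meas : Measurable g :=
    hF_cont.measurable.div (Real.continuous_sinh.pow k).measurable
  have hg_nonneg : ∀ ρ : ℝ, 0 ≤ ρ → 0 ≤ g ρ := by
    intro ρ hρ
    apply div_nonneg _ (by positivity)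
    apply intervalIntegral.integral_nonneg hρ
    intro t ht
    exact pow_nonneg (Real.sinh_nonneg_iff.2 ht.1) k
  have hg_le_self : ∀ ρ : ℝ, 0 ≤ ρ → g ρ ≤ ρ := by
    intro ρ hρ
    rcases eq_or_lt_of_le hρ with h0 | h0
    · simp [hgdef, ← h0]
    · have hs : 0 < Real.sinh ρ := Real.sinh_pos_iff.2 h0
      rw [hgdef]
      rw [div_le_iff₀ (by positivity)]
      have : (∫ t in (0:ℝ)..ρ, Real.sinh t ^ k) ≤ ∫ t in (0:ℝ)..ρ, Real.sinh ρ ^ k := by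
        apply intervalIntegral.integral_mono_on hρ
          ((Real.continuous_sinh.pow k).intervalIntegrable _ _)
          (intervalIntegrable_const)
        intro t ht
        exact pow_le_pow_left₀ (Real.sinh_nonneg_iff.2 ht.1) (Real.sinh_le_sinh.2 ht.2) k
      simpa using this
  have hg_int : ∀ b c : ℝ, 0 ≤ b → c ≤ r → b ≤ c → IntervalIntegrable g volume b c := by
    intro b c hb hc hbc
    rw [intervalIntegrable_iff_integrableOn_Ioc_of_le hbc]
    apply MeasureTheory.Integrable.mono'
      (integrableOn_const measure_Ioc_lt_top.ne enorm_ne_top : IntegrableOn (fun _ => r) _ _)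
      hg_meas.aestronglyMeasurable.restrict
    filter_upwards [ae_restrict_mem measurableSet_Ioc] with x hx
    have hx0 : 0 ≤ x := le_trans hb hx.1.le
    rw [Real.norm_eq_abs, abs_of_nonneg (hg_nonneg x hx0)]
    exact (hg_le_self x hx0).trans (hx.2.trans hc)
  have hC_bound : ∀ ρ : ℝ, 1 ≤ ρ → g ρ ≤ C := by
    intro ρ hρ
    have hρ0 : (0:ℝ) < ρ := lt_of_lt_of_le one_pos hρ
    have hsinh : a * Real.exp ρ / 2 ≤ Real.sinh ρ :=
      sinh_ge_aux ρ hρ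
    have hD : (a * Real.exp ρ / 2) ^ k ≤ Real.sinh ρ ^ k :=
      pow_le_pow_left₀ (by positivity) hsinh k
    have hNum : (∫ t in (0:ℝ)..ρ, Real.sinh t ^ k) ≤
        Real.exp ((k:ℝ) * ρ) / ((k:ℝ) * 2 ^ k) := by
      have h1 : (∫ t in (0:ℝ)..ρ, Real.sinh t ^ k) ≤
          ∫ t in (0:ℝ)..ρ, Real.exp ((k:ℝ) * t) / 2 ^ k := by
        apply intervalIntegral.integral_mono_on hρ0.le
          ((Real.continuous_sinh.pow k).intervalIntegrable _ _)
          (((Real.continuous_exp.comp (continuous_const.mul continuous_id)).div_const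
            _).intervalIntegrable _ _)
        intro t ht
        have hst : Real.sinh t ≤ Real.exp t / 2 := by
          rw [Real.sinh_eq]
          nlinarith [Real.exp_pos (-t)]
        calc Real.sinh t ^ k ≤ (Real.exp t / 2) ^ k :=
              pow_le_pow_left₀ (Real.sinh_nonneg_iff.2 ht.1) hst k
          _ = Real.exp ((k:ℝ) * t) / 2 ^ k := by
              rw [div_pow, ← Real.exp_nat_mul]
      have h2 : (∫ t in (0:ℝ)..ρ, Real.exp ((k:ℝ) * t) / 2 ^ k) =
          (Real.exp ((k:ℝ) * ρ) - 1) / ((k:ℝ) * 2 ^ k) := by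
        rw [intervalIntegral.integral_div, exp_int_aux (k:ℝ) (ne_of_gt hkpos) ρ]
        field_simp
      rw [h2] at h1
      refine h1.trans ?_
      have h3 : Real.exp ((k:ℝ) * ρ) - 1 ≤ Real.exp ((k:ℝ) * ρ) := by linarith
      exact div_le_div_of_nonneg_right h3 (by positivity)
    have hDpos : 0 < (a * Real.exp ρ / 2) ^ k := by positivity
    have step : g ρ ≤ (Real.exp ((k:ℝ) * ρ) / ((k:ℝ) * 2 ^ k)) / ((a * Real.exp ρ / 2) ^ k) :=
      div_le_div₀ (by positivity) hNum hDpos hD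
    refine step.trans (le_of_eq ?_)
    rw [div_pow, mul_pow, ← Real.exp_nat_mul, hCdef]
    have e0 : Real.exp ((k:ℝ) * ρ) ≠ 0 := (Real.exp_pos _).ne'
    field_simp
  have hinner : (∫ ρ in (0:ℝ)..r, ∫ t in (0:ℝ)..ρ, (Real.sinh t / Real.sinh ρ) ^ k) =
      ∫ ρ in (0:ℝ)..r, g ρ := by
    apply intervalIntegral.integral_congr
    intro ρ _
    simp [hgdef, div_pow, intervalIntegral.integral_div]
  rw [hinner, hcast]
  have hint01 : IntervalIntegrable g volume 0 1 := hg_int 0 1 le_rfl hr.le zero_le_one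
  have hint1r : IntervalIntegrable g volume 1 r := hg_int 1 r zero_le_one le_rfl hr.le
  have hsplit : (∫ ρ in (0:ℝ)..r, g ρ) = (∫ ρ in (0:ℝ)..1, g ρ) + ∫ ρ in (1:ℝ)..r, g ρ :=
    (intervalIntegral.integral_add_adjacent_intervals hint01 hint1r).symm
  have hI1 : (∫ ρ in (0:ℝ)..1, g ρ) ≤ 1 / 2 := by
    have h := intervalIntegral.integral_mono_on zero_le_one hint01
      ((continuous_id).intervalIntegrable 0 1) (fun ρ hρ => hg_le_self ρ hρ.1)
    simpa [integral_id] using h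
  have hI2 : (∫ ρ in (1:ℝ)..r, g ρ) ≤ (r - 1) / ((k:ℝ) * a ^ k) := by
    have h := intervalIntegral.integral_mono_on hr.le hint1r
      (intervalIntegrable_const : IntervalIntegrable (fun _ => C) volume 1 r)
      (fun ρ hρ => hC_bound ρ hρ.1)
    have h' : (∫ ρ in (1:ℝ)..r, g ρ) ≤ (r - 1) * C := by simpa [smul_eq_mul] using h
    rwa [hCdef, mul_one_div] at h'
  rw [hsplit]
  linarith
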